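/- arXiv:2405.01375 — 2 statements merged into one kernel-verified Lean document; each statement's English description precedes it below -/
import Mathlib

section
/- The sequent ∀x. (A ⊗ B(x)) ⊢ A ⊗ ∀u. B(u) is not derivable in first-order intuitionistic linear logic (where A is a propositional atom and B a unary predicate). -/
set_option autoImplicit true

/-- First-order intuitionistic linear logic formulas over term domain `ℕ`,
with a nullary atom `atomA`, a unary atom `atomB`, tensor, universal
quantification (HOAS) and the exponential `!`. -/
inductive Fm : Type
  | atomA : Fm
  | atomB : ℕ → Fm
  | tensor : Fm → Fm → Fm
  | all : (ℕ → Fm) → Fm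
  | bang : Fm → Fm

/-- Sequent calculus for first-order intuitionistic linear logic:
`ILLDer Γ Δ F` means `Γ; Δ ⊢ F` with unrestricted context `Γ` and linear
context `Δ`. -/
inductive ILLDer : List Fm → Multiset Fm → Fm → Prop
  | ax : ILLDer Γ {F} F
  | tensorR : ILLDer Γ Δ₁ F → ILLDer Γ Δ₂ G → ILLDer Γ (Δ₁ + Δ₂) (Fm.tensor F G)
  | tensorL : ILLDer Γ (F ::ₘ G ::ₘ Δ) C → ILLDer Γ (Fm.tensor F G ::ₘ Δ) C
  | allR : (∀ t, ILLDer Γ Δ (N t)) → ILLDer Γ Δ (Fm.all N)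
  | allL : ILLDer Γ (N t ::ₘ Δ) C → ILLDer Γ (Fm.all N ::ₘ Δ) C
  | bangR : ILLDer Γ 0 F → ILLDer Γ 0 (Fm.bang F)
  | bangL : ILLDer (F :: Γ) Δ C → ILLDer Γ (Fm.bang F ::ₘ Δ) C
  | copy : F ∈ Γ → ILLDer Γ (F ::ₘ Δ) C → ILLDer Γ Δ C


noncomputable def sem : Fm → Set ℤ
  | Fm.atomA => Set.univ
  | Fm.atomB n => {(n : ℤ)}
  | Fm.tensor F G => {z | ∃ a ∈ sem F, ∃ b ∈ sem G, z = a + b}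
  | Fm.all N => ⋂ t, sem (N t)
  | Fm.bang F => {z | z = 0 ∧ z ∈ sem F}

theorem sound {Γ Δ C} (h : ILLDer Γ Δ C) :
    (∀ F ∈ Γ, (0 : ℤ) ∈ sem F) →
    ∀ m : Multiset ℤ, Multiset.Rel (fun F z => z ∈ sem F) Δ m → m.sum ∈ sem C := by
  induction h with
  | ax =>
    intro _ m hm
    rw [show ({_} : Multiset Fm) = _ ::ₘ 0 from rfl, Multiset.rel_cons_left] at hm
    obtain ⟨b, bs, hb, hbs, rfl⟩ := hm
    rw [Multiset.rel_zero_left] at hbs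
    subst hbs
    simpa using hb
  | tensorR h1 h2 ih1 ih2 =>
    intro hΓ m hm
    rw [Multiset.rel_add_left] at hm
    obtain ⟨m1, m2, hm1, hm2, rfl⟩ := hm
    exact ⟨m1.sum, ih1 hΓ m1 hm1, m2.sum, ih2 hΓ m2 hm2, by simp⟩
  | tensorL h ih =>
    intro hΓ m hm
    rw [Multiset.rel_cons_left] at hm
    obtain ⟨b, bs, hb, hbs, rfl⟩ := hm
    obtain ⟨a, ha, c, hc, rfl⟩ := hb
    have := ih hΓ (a ::ₘ c ::ₘ bs)
      ((Multiset.rel_cons_left).2 ⟨a, c ::ₘ bs, ha, (Multiset.rel_cons_left).2 ⟨c, bs, hc, hbs, rfl⟩, rfl⟩)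
    simpa [add_assoc] using this
  | allR h ih =>
    intro hΓ m hm
    exact Set.mem_iInter.2 fun t => ih t hΓ m hm
  | allL h ih =>
    intro hΓ m hm
    rw [Multiset.rel_cons_left] at hm
    obtain ⟨b, bs, hb, hbs, rfl⟩ := hm
    exact ih hΓ (b ::ₘ bs) ((Multiset.rel_cons_left).2 ⟨b, bs, Set.mem_iInter.1 hb _, hbs, rfl⟩)
  | bangR h ih =>
    intro hΓ m hm
    rw [Multiset.rel_zero_left] at hm
    subst hm
    exact ⟨rfl, by simpa using ih hΓ 0 (Multiset.rel_zero_left.2 rfl)⟩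
  | bangL h ih =>
    intro hΓ m hm
    rw [Multiset.rel_cons_left] at hm
    obtain ⟨b, bs, hb, hbs, rfl⟩ := hm
    obtain ⟨rfl, hF⟩ := hb
    have := ih (by intro G hG; rcases List.mem_cons.1 hG with rfl | hG'; exacts [hF, hΓ _ hG']) bs hbs
    simpa using this
  | copy hmem h ih =>
    intro hΓ m hm
    have := ih hΓ (0 ::ₘ m) ((Multiset.rel_cons_left).2 ⟨0, m, hΓ _ hmem, hm, rfl⟩)
    simpa using this

/-- The sequent `∀x. (A ⊗ B(x)) ⊢ A ⊗ ∀u. B(u)` is not derivable in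
first-order intuitionistic linear logic. -/
theorem stmt0 :
    ¬ ILLDer [] {Fm.all fun x => Fm.tensor Fm.atomA (Fm.atomB x)}
        (Fm.tensor Fm.atomA (Fm.all fun u => Fm.atomB u)) := by
  intro h
  have := sound h (by simp) {0}
    (by
      rw [show ({(0:ℤ)} : Multiset ℤ) = 0 ::ₘ 0 from rfl,
        show ({Fm.all fun x => Fm.tensor Fm.atomA (Fm.atomB x)} : Multiset Fm) = _ ::ₘ 0 from rfl,
        Multiset.rel_cons_left]
      refine ⟨0, 0, ?_, Multiset.rel_zero_left.2 rfl, rfl⟩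
      refine Set.mem_iInter.2 fun t => ⟨-(t:ℤ), trivial, t, rfl, by ring⟩)
  obtain ⟨a, _, b, hb, _⟩ := this
  have h0 : b = (0 : ℤ) := Set.mem_iInter.1 hb 0
  have h1 : b = (1 : ℤ) := Set.mem_iInter.1 hb 1
  omega
end

section
/- The sequent ∀x. !A(x) ⊢ !∀u. A(u) is not derivable in first-order intuitionistic linear logic. -/
set_option autoImplicit true

/-- The premise formula `∀x. !B(x)`. -/
def PP : Fm := Fm.all fun x => Fm.bang (Fm.atomB x)

/-- The formula `∀u. B(u)`. -/
def QQ : Fm := Fm.all fun u => Fm.atomB u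

/-- Index of an atomic or banged-atomic formula. -/
def idx : Fm → ℕ
  | Fm.atomB t => t
  | Fm.bang (Fm.atomB t) => t
  | _ => 0

/-- The invariant: an unprovable class of sequents, closed under the rules
read bottom-up. -/
def Bad (Γ : List Fm) (Δ : Multiset Fm) (C : Fm) : Prop :=
  (∀ G ∈ Γ, ∃ t, G = Fm.atomB t) ∧
  ((C = Fm.bang QQ ∧
      ∀ D ∈ Δ, D = PP ∨ ∃ t, D = Fm.bang (Fm.atomB t) ∨ D = Fm.atomB t) ∨
   (C = QQ ∧ ∀ D ∈ Δ, ∃ t, D = Fm.bang (Fm.atomB t) ∨ D = Fm.atomB t) ∨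
   (∃ u, C = Fm.atomB u ∧ Fm.atomB u ∉ Γ ∧
      ∀ D ∈ Δ, ∃ t, t ≠ u ∧ (D = Fm.bang (Fm.atomB t) ∨ D = Fm.atomB t)))

lemma fresh (Γ : List Fm) (Δ : Multiset Fm) :
    ∃ u : ℕ, (∀ G ∈ Γ, idx G ≠ u) ∧ (∀ D ∈ Δ, idx D ≠ u) := by
  refine ⟨(Γ.map idx).sum + (Δ.map idx).sum + 1, ?_, ?_⟩
  · intro G hG
    have h1 : idx G ≤ (Γ.map idx).sum :=
      List.single_le_sum (by intro x _; exact Nat.zero_le x) _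
        (List.mem_map_of_mem (f := idx) hG)
    omega
  · intro D hD
    have h1 : idx D ≤ (Δ.map idx).sum :=
      Multiset.single_le_sum (by intro x _; exact Nat.zero_le x) _
        (Multiset.mem_map_of_mem idx hD)
    omega

lemma main : ∀ {Γ : List Fm} {Δ : Multiset Fm} {C : Fm},
    ILLDer Γ Δ C → ¬ Bad Γ Δ C := by
  intro Γ Δ C h
  induction h with
  | @ax Γ F =>
      rintro ⟨hΓ, hc⟩
      rcases hc with ⟨hC, hΔ⟩ | ⟨hC, hΔ⟩ | ⟨u, hC, hu, hΔ⟩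
      · subst hC
        rcases hΔ _ (Multiset.mem_singleton_self _) with h | ⟨t, h | h⟩ <;>
          simp [PP, QQ] at h
      · subst hC
        rcases hΔ _ (Multiset.mem_singleton_self _) with ⟨t, h | h⟩ <;>
          simp [QQ] at h
      · subst hC
        rcases hΔ _ (Multiset.mem_singleton_self _) with ⟨t, ht, h | h⟩
        · simp at h
        · injection h with h'; exact ht h'.symm
  | tensorR h1 h2 ih1 ih2 =>
      rintro ⟨hΓ, hc⟩
      rcases hc with ⟨hC, _⟩ | ⟨hC, _⟩ | ⟨u, hC, _, _⟩ <;> simp [PP, QQ] at hC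
  | @tensorL Γ F G Δ C h ih =>
      rintro ⟨hΓ, hc⟩
      rcases hc with ⟨hC, hΔ⟩ | ⟨hC, hΔ⟩ | ⟨u, hC, hu, hΔ⟩
      · rcases hΔ _ (Multiset.mem_cons_self _ _) with h | ⟨t, h | h⟩ <;>
          simp [PP] at h
      · rcases hΔ _ (Multiset.mem_cons_self _ _) with ⟨t, h | h⟩ <;> simp at h
      · rcases hΔ _ (Multiset.mem_cons_self _ _) with ⟨t, _, h | h⟩ <;> simp at h
  | @allR Γ Δ N h ih =>
      rintro ⟨hΓ, hc⟩
      rcases hc with ⟨hC, hΔ⟩ | ⟨hC, hΔ⟩ | ⟨u, hC, hu, hΔ⟩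
      · simp [QQ] at hC
      · have hN : N = fun u => Fm.atomB u := by
          injection hC
        obtain ⟨u, hΓu, hΔu⟩ := fresh Γ Δ
        refine ih u ⟨hΓ, Or.inr (Or.inr ⟨u, ?_, ?_, ?_⟩)⟩
        · rw [hN]
        · intro hmem
          exact hΓu _ hmem (by simp [idx])
        · intro D hD
          rcases hΔ D hD with ⟨t, hDt⟩
          refine ⟨t, ?_, hDt⟩
          intro hteq
          apply hΔu D hD
          rcases hDt with h | h <;> subst h <;> simp [idx, hteq]
      · simp at hC
  | @allL Γ N Δ C t h ih =>
      rintro ⟨hΓ, hc⟩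
      rcases hc with ⟨hC, hΔ⟩ | ⟨hC, hΔ⟩ | ⟨u, hC, hu, hΔ⟩
      · rcases hΔ _ (Multiset.mem_cons_self _ _) with h1 | ⟨s, h1 | h1⟩
        · have hN : N = fun x => Fm.bang (Fm.atomB x) := by
            rw [PP] at h1; injection h1
          refine ih ⟨hΓ, Or.inl ⟨hC, ?_⟩⟩
          intro D hD
          rcases Multiset.mem_cons.1 hD with hD | hD
          · subst hD
            exact Or.inr ⟨t, Or.inl (by rw [hN])⟩
          · exact hΔ D (Multiset.mem_cons_of_mem hD)
        · simp at h1
        · simp at h1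
      · rcases hΔ _ (Multiset.mem_cons_self _ _) with ⟨s, h1 | h1⟩ <;> simp at h1
      · rcases hΔ _ (Multiset.mem_cons_self _ _) with ⟨s, _, h1 | h1⟩ <;>
          simp at h1
  | @bangR Γ F h ih =>
      rintro ⟨hΓ, hc⟩
      rcases hc with ⟨hC, hΔ⟩ | ⟨hC, hΔ⟩ | ⟨u, hC, hu, hΔ⟩
      · have hF : F = QQ := by injection hC
        subst hF
        exact ih ⟨hΓ, Or.inr (Or.inl ⟨rfl, by intro D hD; simp at hD⟩)⟩
      · simp [QQ] at hC
      · simp at hC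
  | @bangL F Γ Δ C h ih =>
      rintro ⟨hΓ, hc⟩
      rcases hc with ⟨hC, hΔ⟩ | ⟨hC, hΔ⟩ | ⟨u, hC, hu, hΔ⟩
      · rcases hΔ _ (Multiset.mem_cons_self _ _) with h1 | ⟨t, h1 | h1⟩
        · simp [PP] at h1
        · have hF : F = Fm.atomB t := by injection h1
          refine ih ⟨?_, Or.inl ⟨hC, fun D hD => hΔ D (Multiset.mem_cons_of_mem hD)⟩⟩
          intro G hG
          rcases List.mem_cons.1 hG with hG | hG
          · exact ⟨t, by rw [hG, hF]⟩
          · exact hΓ G hG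
        · simp at h1
      · rcases hΔ _ (Multiset.mem_cons_self _ _) with ⟨t, h1 | h1⟩
        · have hF : F = Fm.atomB t := by injection h1
          refine ih ⟨?_, Or.inr (Or.inl ⟨hC, fun D hD => hΔ D (Multiset.mem_cons_of_mem hD)⟩)⟩
          intro G hG
          rcases List.mem_cons.1 hG with hG | hG
          · exact ⟨t, by rw [hG, hF]⟩
          · exact hΓ G hG
        · simp at h1
      · rcases hΔ _ (Multiset.mem_cons_self _ _) with ⟨t, ht, h1 | h1⟩
        · have hF : F = Fm.atomB t := by injection h1
          refine ih ⟨?_, Or.inr (Or.inr ⟨u, hC, ?_,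
            fun D hD => hΔ D (Multiset.mem_cons_of_mem hD)⟩)⟩
          · intro G hG
            rcases List.mem_cons.1 hG with hG | hG
            · exact ⟨t, by rw [hG, hF]⟩
            · exact hΓ G hG
          · intro hmem
            rcases List.mem_cons.1 hmem with h2 | h2
            · rw [hF] at h2; injection h2 with h3; exact ht h3.symm
            · exact hu h2
        · simp at h1
  | @copy Γ F Δ C hF h ih =>
      rintro ⟨hΓ, hc⟩
      obtain ⟨s, hFs⟩ := hΓ F hF
      rcases hc with ⟨hC, hΔ⟩ | ⟨hC, hΔ⟩ | ⟨u, hC, hu, hΔ⟩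
      · refine ih ⟨hΓ, Or.inl ⟨hC, ?_⟩⟩
        intro D hD
        rcases Multiset.mem_cons.1 hD with hD | hD
        · subst hD; exact Or.inr ⟨s, Or.inr hFs⟩
        · exact hΔ D hD
      · refine ih ⟨hΓ, Or.inr (Or.inl ⟨hC, ?_⟩)⟩
        intro D hD
        rcases Multiset.mem_cons.1 hD with hD | hD
        · subst hD; exact ⟨s, Or.inr hFs⟩
        · exact hΔ D hD
      · refine ih ⟨hΓ, Or.inr (Or.inr ⟨u, hC, hu, ?_⟩)⟩
        intro D hD
        rcases Multiset.mem_cons.1 hD with hD | hD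
        · subst hD
          refine ⟨s, ?_, Or.inr hFs⟩
          intro hsu
          apply hu
          rw [hsu] at hFs
          rw [← hFs]
          exact hF
        · exact hΔ D hD

/-- The sequent `∀x. !A(x) ⊢ !∀u. A(u)` is not derivable in first-order
intuitionistic linear logic (here `atomB` plays the role of the unary
atom `A`). -/
theorem stmt2 :
    ¬ ILLDer [] {Fm.all fun x => Fm.bang (Fm.atomB x)}
        (Fm.bang (Fm.all fun u => Fm.atomB u)) := by
  intro h
  refine main h ⟨by simp, Or.inl ⟨rfl, ?_⟩⟩
  intro D hD
  rw [Multiset.mem_singleton] at hD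
  subst hD
  exact Or.inl rfl
end
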